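/- Let S=(1,s_2,s_3,...) be a packing sequence and define S' by s_i' = ⌊s_{i+1}/2⌋ for all i ≥ 1. For n ≥ 3, if the cycle C_{2n} is χ_S-critical, then C_n is χ_{S'}-critical. -/

import Mathlib

open SimpleGraph

/-- `IsSPackingColoring G s φ` : `φ` is an `S`-packing coloring of `G` with colors
`Fin k`, where the value `s i` represents the entry `s_{i+1}` of the packing
sequence `S = (s_1, s_2, …)` (0-indexed encoding), and the color `j : Fin k`
represents color `j+1`: two distinct vertices sharing a color `i` (1-indexed)
must be at distance greater than `s_i`. -/
def IsSPackingColoring {V : Type*} (G : SimpleGraph V) (s : ℕ → ℕ) {k : ℕ}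
    (φ : V → Fin k) : Prop :=
  ∀ u v : V, u ≠ v → φ u = φ v → (s (φ u) : ℕ∞) < G.edist u v

/-- The `S`-packing chromatic number of `G`: the least `k` admitting an
`S`-packing `k`-coloring. -/
noncomputable def SPackingChromatic {V : Type*} (G : SimpleGraph V) (s : ℕ → ℕ) : ℕ :=
  sInf {k | ∃ φ : V → Fin k, IsSPackingColoring G s φ}

/-- `G` is `χ_S`-critical: every proper subgraph has a strictly smaller
`S`-packing chromatic number. -/
def SCritical {V : Type*} (G : SimpleGraph V) (s : ℕ → ℕ) : Prop :=
  ∀ H : G.Subgraph, H ≠ ⊤ → SPackingChromatic H.coe s < SPackingChromatic G s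

/-- `G` is `χ_S`-vertex-critical: deleting any vertex strictly decreases the
`S`-packing chromatic number. -/
def SVertexCritical {V : Type*} (G : SimpleGraph V) (s : ℕ → ℕ) : Prop :=
  ∀ v : V, SPackingChromatic (G.induce {u | u ≠ v}) s < SPackingChromatic G s

set_option linter.unusedSectionVars false
set_option linter.unusedVariables false

open Fin.CommRing Fin.NatCast

lemma aux_chi_le {V : Type*} {G : SimpleGraph V} {s : ℕ → ℕ} {k : ℕ} (φ : V → Fin k)
    (h : IsSPackingColoring G s φ) : SPackingChromatic G s ≤ k :=
  Nat.sInf_le ⟨φ, h⟩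

lemma aux_exists_col {V : Type*} [Finite V] (G : SimpleGraph V) (s : ℕ → ℕ) :
    ∃ φ : V → Fin (SPackingChromatic G s), IsSPackingColoring G s φ := by
  obtain ⟨r, ⟨e⟩⟩ := Finite.exists_equiv_fin V
  have hmem : r ∈ {k | ∃ φ : V → Fin k, IsSPackingColoring G s φ} :=
    ⟨e, fun u v huv h => absurd (e.injective h) huv⟩
  exact Nat.sInf_mem ⟨r, hmem⟩

lemma aux_mono_colors {V : Type*} {G : SimpleGraph V} {s : ℕ → ℕ} {k K : ℕ} (hkK : k ≤ K)
    (φ : V → Fin k) (h : IsSPackingColoring G s φ) :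
    ∃ φ' : V → Fin K, IsSPackingColoring G s φ' := by
  refine ⟨fun v => Fin.castLE hkK (φ v), fun u v huv heq => ?_⟩
  have h2 : φ u = φ v := Fin.castLE_injective hkK heq
  have h3 := h u v huv h2
  simpa using h3

lemma aux_edist_hom {V W : Type*} {A : SimpleGraph V} {B : SimpleGraph W} (f : A →g B)
    (u v : V) : B.edist (f u) (f v) ≤ A.edist u v := by
  by_cases h : A.edist u v = ⊤
  · simp [h]
  · obtain ⟨p, hp⟩ := exists_walk_of_edist_ne_top h
    calc B.edist (f u) (f v) ≤ ((p.map f).length : ℕ∞) := edist_le _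
      _ = (p.length : ℕ∞) := by rw [Walk.length_map]
      _ = A.edist u v := hp

lemma aux_chi_mono_sub {V : Type*} [Finite V] {G : SimpleGraph V} {H H' : G.Subgraph}
    (hle : H ≤ H') (s : ℕ → ℕ) :
    SPackingChromatic H.coe s ≤ SPackingChromatic H'.coe s := by
  obtain ⟨φ', hφ'⟩ := aux_exists_col H'.coe s
  refine aux_chi_le (fun v => φ' (Subgraph.inclusion hle v)) (fun u v huv heq => ?_)
  have hne : Subgraph.inclusion hle u ≠ Subgraph.inclusion hle v := by
    intro hh
    have h2 : (u : V) = (v : V) := congrArg (Subtype.val : ↥H'.verts → V) hh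
    exact huv (Subtype.ext h2)
  have := hφ' _ _ hne heq
  calc ((s (φ' (Subgraph.inclusion hle u)) : ℕ) : ℕ∞)
      < H'.coe.edist (Subgraph.inclusion hle u) (Subgraph.inclusion hle v) := this
    _ ≤ H.coe.edist u v := aux_edist_hom (Subgraph.inclusion hle) u v

section CycleMetric
variable {m : ℕ} [NeZero m]

lemma aux_adj_succ (hm : 2 ≤ m) (u : Fin m) : (cycleGraph m).Adj u (u + 1) := by
  rw [cycleGraph_adj']
  right
  have h : u + 1 - u = 1 := by ring
  rw [h, Fin.val_one', Nat.mod_eq_of_lt hm]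

lemma aux_edist_le_k (hm : 2 ≤ m) : ∀ (k : ℕ) (u : Fin m),
    (cycleGraph m).edist u (u + (k : Fin m)) ≤ (k : ℕ∞) := by
  intro k
  induction k with
  | zero => intro u; simp
  | succ k ih =>
    intro u
    calc (cycleGraph m).edist u (u + ((k+1:ℕ) : Fin m))
        = (cycleGraph m).edist u (u + (k:Fin m) + 1) := by push_cast; rw [add_assoc]
      _ ≤ (cycleGraph m).edist u (u + (k:Fin m))
            + (cycleGraph m).edist (u + (k:Fin m)) (u + (k:Fin m) + 1) :=
          SimpleGraph.edist_triangle
      _ ≤ (k : ℕ∞) + 1 := by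
          gcongr
          · exact ih u
          · exact le_of_eq (edist_eq_one_iff_adj.mpr (aux_adj_succ hm _))
      _ = ((k+1:ℕ) : ℕ∞) := by push_cast; ring

lemma aux_edist_le_sub (hm : 2 ≤ m) (u v : Fin m) :
    (cycleGraph m).edist u v ≤ (((v - u).val : ℕ) : ℕ∞) := by
  have h := aux_edist_le_k hm (v - u).val u
  have h2 : u + ((((v - u).val : ℕ)) : Fin m) = v := by
    rw [Fin.cast_val_eq_self]; ring
  rwa [h2] at h

lemma aux_cast_sub (a b : ℕ) (h : b ≤ a) : (a : Fin m) - (b : Fin m) = ((a - b : ℕ) : Fin m) := by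
  have h2 : ((a : Fin m)) = ((a - b : ℕ) : Fin m) + b := by rw [← Nat.cast_add]; congr 1; omega
  rw [h2, add_sub_cancel_right]

lemma aux_walk_decomp : ∀ {u v : Fin m} (p : (cycleGraph m).Walk u v),
    ∃ a b : ℕ, a + b ≤ p.length ∧ v - u = (a : Fin m) - (b : Fin m) := by
  intro u v p
  induction p with
  | nil => exact ⟨0, 0, by simp⟩
  | @cons u x v hadj p ih =>
    obtain ⟨a, b, hab, hsub⟩ := ih
    rw [cycleGraph_adj'] at hadj
    rcases hadj with h1 | h1
    · -- (u - x).val = 1, so x - u = -(u - x) and u - x = 1 needs val...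
      have hm2 : 1 < m := by have := (u - x).isLt; omega
      have hux : u - x = ((1:ℕ) : Fin m) := by
        apply Fin.ext; rw [h1, Fin.val_natCast, Nat.mod_eq_of_lt hm2]
      refine ⟨a, b + 1, by rw [Walk.length_cons]; omega, ?_⟩
      have : v - u = (v - x) + (x - u) := by ring
      rw [this, hsub]
      have hxu : x - u = -(((1:ℕ)) : Fin m) := by rw [← hux]; ring
      rw [hxu]; push_cast; ring
    · have hm2 : 1 < m := by have := (x - u).isLt; omega
      have hxu : x - u = ((1:ℕ) : Fin m) := by
        apply Fin.ext; rw [h1, Fin.val_natCast, Nat.mod_eq_of_lt hm2]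
      refine ⟨a + 1, b, by rw [Walk.length_cons]; omega, ?_⟩
      have : v - u = (v - x) + (x - u) := by ring
      rw [this, hsub, hxu]; push_cast; ring

lemma aux_edist_lower (u v : Fin m) :
    ((min ((v - u).val) ((u - v).val) : ℕ) : ℕ∞) ≤ (cycleGraph m).edist u v := by
  by_cases htop : (cycleGraph m).edist u v = ⊤
  · rw [htop]; exact le_top
  · obtain ⟨p, hp⟩ := exists_walk_of_edist_ne_top htop
    rw [← hp, Nat.cast_le]
    obtain ⟨a, b, hab, hsub⟩ := aux_walk_decomp p
    rcases le_total b a with h | h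
    · have : v - u = ((a - b : ℕ) : Fin m) := by rw [hsub, aux_cast_sub a b h]
      have hval : (v - u).val = (a - b) % m := by rw [this, Fin.val_natCast]
      have : (v - u).val ≤ p.length := by rw [hval]; have := Nat.mod_le (a-b) m; omega
      omega
    · have h2 : u - v = ((b - a : ℕ) : Fin m) := by
        have : u - v = (b : Fin m) - (a : Fin m) := by rw [← neg_sub v u, hsub]; ring
        rw [this, aux_cast_sub b a h]
      have hval : (u - v).val = (b - a) % m := by rw [h2, Fin.val_natCast]
      have : (u - v).val ≤ p.length := by rw [hval]; have := Nat.mod_le (b-a) m; omega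
      omega

end CycleMetric

def cutS (m : ℕ) [NeZero m] (c : Fin m) : (cycleGraph m).Subgraph :=
  (⊤ : (cycleGraph m).Subgraph).deleteEdges {s(c - 1, c)}

section Cut
variable {m : ℕ} [NeZero m]

lemma cutS_verts (c : Fin m) : (cutS m c).verts = Set.univ := by
  simp [cutS]

lemma cutS_adj {c : Fin m} {a b : Fin m} :
    (cutS m c).Adj a b ↔ (cycleGraph m).Adj a b ∧ s(a, b) ≠ s(c - 1, c) := by
  simp [cutS, Subgraph.deleteEdges_adj]

lemma cutS_ne_top (hm : 2 ≤ m) (c : Fin m) : cutS m c ≠ ⊤ := by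
  intro h
  have hadj : (cycleGraph m).Adj (c - 1) c := by
    rw [cycleGraph_adj']
    right
    have h2 : c - (c - 1) = 1 := by ring
    rw [h2, Fin.val_one', Nat.mod_eq_of_lt hm]
  have h1 : ((⊤ : (cycleGraph m).Subgraph)).Adj (c - 1) c := Subgraph.top_adj.mpr hadj
  rw [← h] at h1
  rw [cutS_adj] at h1
  exact h1.2 rfl

lemma aux_cut_step (hm : 3 ≤ m) (c : Fin m) {t : ℕ} (ht : t + 1 < m) :
    (cutS m c).Adj (c + (t : Fin m)) (c + ((t + 1 : ℕ) : Fin m)) := by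
  rw [cutS_adj]
  constructor
  · rw [cycleGraph_adj']
    right
    have h2 : c + ((t + 1 : ℕ) : Fin m) - (c + (t : Fin m)) = 1 := by push_cast; ring
    rw [h2, Fin.val_one', Nat.mod_eq_of_lt (by omega)]
  · intro hs
    rw [Sym2.eq_iff] at hs
    rcases hs with ⟨h1, h2⟩ | ⟨h1, h2⟩
    · -- c + t = c - 1 and c + (t+1) = c
      have h3 : ((t + 1 : ℕ) : Fin m) = 0 := by
        have : (t : Fin m) = -1 := by
          have h1' : c + (t : Fin m) = c + (-1) := by rw [h1]; ring
          exact add_left_cancel h1'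
        push_cast
        rw [this]; ring
      have h4 : (t + 1) % m = 0 := by
        have := congrArg Fin.val h3
        rwa [Fin.val_natCast, Fin.val_zero] at this
      rw [Nat.mod_eq_of_lt ht] at h4
      omega
    · -- c + t = c and c + (t+1) = c - 1
      have h3 : (t : Fin m) = 0 := by rwa [add_eq_left] at h1
      have h4 : t % m = 0 := by
        have := congrArg Fin.val h3
        rwa [Fin.val_natCast, Fin.val_zero] at this
      rw [Nat.mod_eq_of_lt (by omega)] at h4
      subst h4
      -- c + 1 = c - 1, so 2 = 0 in Fin m
      have h5 : ((2 : ℕ) : Fin m) = 0 := by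
        have h7 : c + ((2 : ℕ) : Fin m) = c := by
          calc c + ((2 : ℕ) : Fin m) = c + ((0 + 1 : ℕ) : Fin m) + 1 := by push_cast; ring
            _ = (c - 1) + 1 := by rw [h2]
            _ = c := by ring
        rwa [add_eq_left] at h7
      have h8 : (2 : ℕ) % m = 0 := by
        have := congrArg Fin.val h5
        rwa [Fin.val_natCast, Fin.val_zero] at this
      rw [Nat.mod_eq_of_lt (by omega)] at h8
      omega

lemma aux_cut_edist_upper (hm : 3 ≤ m) (c : Fin m) :
    ∀ b a : ℕ, a ≤ b → b < m →
    ∀ (ha : (c + (a : Fin m)) ∈ (cutS m c).verts) (hb : (c + (b : Fin m)) ∈ (cutS m c).verts),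
    (cutS m c).coe.edist ⟨c + (a : Fin m), ha⟩ ⟨c + (b : Fin m), hb⟩ ≤ ((b - a : ℕ) : ℕ∞) := by
  intro b
  induction b with
  | zero =>
    intro a hab _ ha hb
    have : a = 0 := by omega
    subst this
    rw [edist_eq_zero_iff.mpr rfl]
    exact zero_le
  | succ b ih =>
    intro a hab hbm ha hb
    rcases Nat.eq_or_lt_of_le hab with heq | hlt
    · subst heq
      rw [edist_eq_zero_iff.mpr rfl]
      exact zero_le
    · have hab' : a ≤ b := by omega
      have hbm' : b < m := by omega
      have hmem : (c + (b : Fin m)) ∈ (cutS m c).verts := by rw [cutS_verts]; trivial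
      have hadj : (cutS m c).coe.Adj ⟨c + (b : Fin m), hmem⟩ ⟨c + ((b + 1 : ℕ) : Fin m), hb⟩ := by
        rw [Subgraph.coe_adj]
        exact aux_cut_step hm c hbm
      calc (cutS m c).coe.edist ⟨c + (a : Fin m), ha⟩ ⟨c + ((b + 1 : ℕ) : Fin m), hb⟩
          ≤ (cutS m c).coe.edist ⟨c + (a : Fin m), ha⟩ ⟨c + (b : Fin m), hmem⟩
            + (cutS m c).coe.edist ⟨c + (b : Fin m), hmem⟩ ⟨c + ((b + 1 : ℕ) : Fin m), hb⟩ :=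
            SimpleGraph.edist_triangle
        _ ≤ ((b - a : ℕ) : ℕ∞) + 1 := by
            gcongr
            · exact ih a hab' hbm' ha hmem
            · exact le_of_eq (edist_eq_one_iff_adj.mpr hadj)
        _ = ((b + 1 - a : ℕ) : ℕ∞) := by
            rw [← Nat.cast_one, ← Nat.cast_add, Nat.cast_inj]
            omega

end Cut

section CutLower
variable {m : ℕ} [NeZero m]

lemma aux_cut_adj_idx_one {c x y : Fin m} (h : (cutS m c).Adj x y) (h1 : (y - x).val = 1) :
    (y - c).val = (x - c).val + 1 := by
  have hm2 : 1 < m := by have := (y - x).isLt; omega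
  have hyx : y = x + 1 := by
    have h2 : y - x = 1 := by
      apply Fin.ext
      rw [h1, Fin.val_one', Nat.mod_eq_of_lt hm2]
    rw [← h2]; ring
  have hval1 : (1 : Fin m).val = 1 := by rw [Fin.val_one', Nat.mod_eq_of_lt hm2]
  have hyc : y - c = (x - c) + 1 := by rw [hyx]; ring
  by_cases hp : (x - c).val + 1 < m
  · rw [hyc, Fin.add_def, hval1]
    exact Nat.mod_eq_of_lt hp
  · exfalso
    have hplt := (x - c).isLt
    have hp' : (x - c).val = m - 1 := by omega
    have hy : y = c := by
      have h0 : ((x - c) + 1).val = 0 := by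
        rw [Fin.add_def, hval1, hp']
        show (m - 1 + 1) % m = 0
        have : m - 1 + 1 = m := by omega
        rw [this, Nat.mod_self]
      have h3 : y - c = 0 := by rw [hyc]; exact Fin.ext h0
      have := sub_eq_zero.mp h3
      exact this
    have hx : x = c - 1 := by rw [← hy, hyx]; ring
    rw [cutS_adj] at h
    exact h.2 (by rw [hx, hy])

lemma aux_cut_adj_idx {c : Fin m} {x y : Fin m} (h : (cutS m c).Adj x y) :
    (y - c).val = (x - c).val + 1 ∨ (x - c).val = (y - c).val + 1 := by
  have hcyc := (cutS_adj.mp h).1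
  rw [cycleGraph_adj'] at hcyc
  rcases hcyc with h1 | h1
  · right
    exact aux_cut_adj_idx_one h.symm h1
  · left
    exact aux_cut_adj_idx_one h h1

lemma aux_cut_walk {c : Fin m} : ∀ {x y : (cutS m c).verts} (p : (cutS m c).coe.Walk x y),
    ((x : Fin m) - c).val ≤ ((y : Fin m) - c).val + p.length ∧
    ((y : Fin m) - c).val ≤ ((x : Fin m) - c).val + p.length := by
  intro x y p
  induction p with
  | nil => simp
  | @cons x z y hadj p ih =>
    have h : (cutS m c).Adj (x : Fin m) (z : Fin m) := by rwa [Subgraph.coe_adj] at hadj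
    have hstep := aux_cut_adj_idx h
    rw [Walk.length_cons]
    omega

lemma aux_cut_edist_lower {c : Fin m} (x y : (cutS m c).verts) :
    ((((y : Fin m) - c).val - (((x : Fin m) - c).val) : ℕ) : ℕ∞) ≤ (cutS m c).coe.edist x y := by
  by_cases htop : (cutS m c).coe.edist x y = ⊤
  · rw [htop]; exact le_top
  · obtain ⟨p, hp⟩ := exists_walk_of_edist_ne_top htop
    rw [← hp, Nat.cast_le]
    have := aux_cut_walk p
    omega

end CutLower

section Reduce
variable {m : ℕ} [NeZero m]

lemma aux_le_cut_of_not_adj {H : (cycleGraph m).Subgraph} {a b : Fin m}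
    (hna : ¬ H.Adj a b) (hba : (b - a).val = 1) : H ≤ cutS m b := by
  have hm2 : 1 < m := by have := (b - a).isLt; omega
  have hab : a = b - 1 := by
    have h2 : b - a = 1 := by
      apply Fin.ext; rw [hba, Fin.val_one', Nat.mod_eq_of_lt hm2]
    have : a = b - (b - a) := by ring
    rw [this, h2]
  constructor
  · rw [cutS_verts]; exact Set.subset_univ _
  · intro x y hxy
    rw [cutS_adj]
    refine ⟨H.adj_sub hxy, fun hs => ?_⟩
    rw [Sym2.eq_iff] at hs
    rcases hs with ⟨hx, hy⟩ | ⟨hx, hy⟩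
    · rw [← hab] at hx; subst hx; subst hy; exact hna hxy
    · rw [← hab] at hy; subst hx; subst hy; exact hna hxy.symm

lemma aux_sub_le_cut {H : (cycleGraph m).Subgraph} (hne : H ≠ ⊤) :
    ∃ c : Fin m, H ≤ cutS m c := by
  by_cases hv : H.verts = Set.univ
  · -- some adjacency is missing
    have hadj : ∃ a b, (cycleGraph m).Adj a b ∧ ¬ H.Adj a b := by
      by_contra hcon
      push_neg at hcon
      apply hne
      ext x y
      · simp [hv, Subgraph.verts_top]
      · simp only [Subgraph.top_adj]
        exact ⟨fun h => H.adj_sub h, fun h => hcon x y h⟩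
    obtain ⟨a, b, hGab, hnab⟩ := hadj
    rw [cycleGraph_adj'] at hGab
    rcases hGab with h1 | h1
    · exact ⟨a, aux_le_cut_of_not_adj (fun h => hnab h.symm) h1⟩
    · exact ⟨b, aux_le_cut_of_not_adj hnab h1⟩
  · obtain ⟨v, hv'⟩ := Set.ne_univ_iff_exists_notMem _ |>.mp hv
    refine ⟨v + 1, ?_, ?_⟩
    · rw [cutS_verts]; exact Set.subset_univ _
    · intro x y hxy
      rw [cutS_adj]
      refine ⟨H.adj_sub hxy, fun hs => ?_⟩
      have hc1 : v + 1 - 1 = v := by ring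
      rw [hc1, Sym2.eq_iff] at hs
      rcases hs with ⟨hx, _⟩ | ⟨_, hy⟩
      · exact hv' (hx ▸ H.edge_vert hxy)
      · exact hv' (hy ▸ H.edge_vert hxy.symm)

end Reduce

lemma aux_hard (s : ℕ → ℕ) (h1 : s 0 = 1) {n : ℕ} (hn : 3 ≤ n) [NeZero n] [NeZero (2*n)]
    (c2 : Fin (2*n)) (c : Fin n) {K : ℕ} (hK : 1 ≤ K)
    (φ : ↥(cutS (2*n) c2).verts → Fin K)
    (hφ : IsSPackingColoring (cutS (2*n) c2).coe s φ) :
    ∃ Φ : ↥(cutS n c).verts → Fin (K-1),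
      IsSPackingColoring (cutS n c).coe (fun i => s (i+1)/2) Φ := by
  classical
  haveI : NeZero K := ⟨by omega⟩
  have hmem2 : ∀ t : ℕ, (c2 + (t : Fin (2*n))) ∈ (cutS (2*n) c2).verts := fun t => by
    rw [cutS_verts]; trivial
  set V2 : ℕ → ↥(cutS (2*n) c2).verts := fun t => ⟨c2 + (t : Fin (2*n)), hmem2 t⟩ with hV2
  have hV2inj : ∀ t t', t < 2*n → t' < 2*n → V2 t = V2 t' → t = t' := by
    intro t t' ht ht' h
    have h2 : c2 + (t : Fin (2*n)) = c2 + (t' : Fin (2*n)) :=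
      congrArg (Subtype.val : ↥(cutS (2*n) c2).verts → Fin (2*n)) h
    have h3 : (t : Fin (2*n)) = (t' : Fin (2*n)) := add_left_cancel h2
    have h4 := congrArg Fin.val h3
    rwa [Fin.val_natCast, Fin.val_natCast, Nat.mod_eq_of_lt ht, Nat.mod_eq_of_lt ht'] at h4
  have hzero : ∀ t : ℕ, t + 1 < 2*n → φ (V2 t) = 0 → φ (V2 (t+1)) ≠ 0 := by
    intro t ht hz hz'
    have hne : V2 t ≠ V2 (t+1) := fun h => by
      have := hV2inj t (t+1) (by omega) ht h; omega
    have hlt := hφ (V2 t) (V2 (t+1)) hne (by rw [hz, hz'])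
    have hadj : (cutS (2*n) c2).coe.Adj (V2 t) (V2 (t+1)) := by
      rw [Subgraph.coe_adj]; exact aux_cut_step (by omega) c2 ht
    rw [hz, edist_eq_one_iff_adj.mpr hadj] at hlt
    simp only [Fin.val_zero, h1, Nat.cast_one, lt_self_iff_false] at hlt
  set N : Finset ℕ := (Finset.range (2*n)).filter (fun t => φ (V2 t) ≠ 0) with hN
  have hmemN : ∀ {t}, t ∈ N ↔ (t < 2*n ∧ φ (V2 t) ≠ 0) := by
    intro t; simp [hN]
  have hcard : n ≤ N.card := by
    have hsum : N.card + ((Finset.range (2*n)).filter (fun t => ¬ φ (V2 t) ≠ 0)).card = 2*n := by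
      rw [hN, Finset.card_filter_add_card_filter_not, Finset.card_range]
    have hZcard : ((Finset.range (2*n)).filter (fun t => ¬ φ (V2 t) ≠ 0)).card ≤ (Finset.range n).card := by
      apply Finset.card_le_card_of_injOn (fun t => t / 2)
      · intro t ht
        simp only [Finset.mem_coe, Finset.mem_filter, Finset.mem_range] at ht
        simp only [Finset.mem_coe, Finset.mem_range]
        omega
      · intro t ht t' ht' heq
        simp only [Finset.coe_filter, Finset.mem_range, Set.mem_setOf_eq, not_not] at ht ht'
        simp only at heq
        by_contra hne2
        rcases Nat.lt_or_ge t t' with h | h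
        · have h3 : t' = t + 1 := by omega
          subst h3
          exact hzero t ht'.1 ht.2 ht'.2
        · have h3 : t = t' + 1 := by omega
          subst h3
          exact hzero t' ht.1 ht'.2 ht.2
    rw [Finset.card_range] at hZcard
    omega
  set e := N.orderIsoOfFin rfl with he
  set T : ℕ → ℕ := fun q => if h : q < N.card then (e ⟨q, h⟩ : ℕ) else 0 with hT
  have hTmem : ∀ q, q < N.card → T q ∈ N := by
    intro q h
    simp only [hT, dif_pos h]
    exact (e ⟨q, h⟩).2
  have hTmono : ∀ p q, p < q → q < N.card → T p < T q := by
    intro p q hpq hq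
    have hp : p < N.card := by omega
    simp only [hT, dif_pos hp, dif_pos hq]
    exact Subtype.coe_lt_coe.mpr (e.lt_iff_lt.mpr (Fin.mk_lt_mk.mpr hpq))
  have hTsurj : ∀ x ∈ N, ∃ q, q < N.card ∧ T q = x := by
    intro x hx
    refine ⟨(e.symm ⟨x, hx⟩).val, (e.symm ⟨x, hx⟩).isLt, ?_⟩
    simp only [hT, dif_pos (e.symm ⟨x, hx⟩).isLt]
    rw [Fin.eta, e.apply_symm_apply]
  have hgap : ∀ q, q + 1 < N.card → T (q+1) ≤ T q + 2 := by
    intro q hq1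
    have hq : q < N.card := by omega
    have hm1 := hmemN.mp (hTmem q hq)
    have hm2 := hmemN.mp (hTmem (q+1) hq1)
    have hmono := hTmono q (q+1) (by omega) hq1
    have hz : ∃ z ∈ N, T q < z ∧ z ≤ T q + 2 := by
      by_cases hz1 : T q + 1 ∈ N
      · exact ⟨T q + 1, hz1, by omega, by omega⟩
      · have hlt2n : T q + 1 < 2*n := by
          rcases Nat.eq_or_lt_of_le (show T q + 1 ≤ T (q+1) by omega) with h | h
          · exact absurd (h ▸ hmemN.mp (hTmem (q+1) hq1) : T q + 1 < 2*n ∧ _) (by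
              intro hh; exact hz1 (hmemN.mpr hh))
          · omega
        have hzt : φ (V2 (T q + 1)) = 0 := by
          by_contra hnz; exact hz1 (hmemN.mpr ⟨hlt2n, hnz⟩)
        by_cases h2 : T q + 2 < 2*n
        · have hnz2 : φ (V2 (T q + 1 + 1)) ≠ 0 := hzero (T q + 1) (by omega) hzt
          exact ⟨T q + 2, hmemN.mpr ⟨h2, by
            have : T q + 1 + 1 = T q + 2 := by omega
            rwa [this] at hnz2⟩, by omega, le_rfl⟩
        · exfalso
          have heq2 : T (q+1) = T q + 1 := by omega
          exact hz1 (heq2 ▸ hTmem (q+1) hq1)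
    obtain ⟨z, hzN, hz1, hz2⟩ := hz
    obtain ⟨p, hp, hTp⟩ := hTsurj z hzN
    have hqp : q + 1 ≤ p := by
      by_contra hle
      push_neg at hle
      rcases Nat.eq_or_lt_of_le (show p ≤ q by omega) with h | h
      · subst h; omega
      · have := hTmono p q h hq; omega
    have hfin : T (q+1) ≤ T p := by
      rcases Nat.eq_or_lt_of_le hqp with h | h
      · rw [h]
      · exact le_of_lt (hTmono _ _ h hp)
    omega
  have hpair : ∀ p q, p ≤ q → q < N.card → T q ≤ T p + 2*(q-p) := by
    intro p q hpq
    induction q, hpq using Nat.le_induction with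
    | base => intro _; simp
    | succ q hq ih =>
      intro hqc
      have h3 := hgap q hqc
      have h4 := ih (by omega)
      omega
  -- properties of colors at T q
  have hφpos : ∀ q, q < N.card → 1 ≤ (φ (V2 (T q))).val := by
    intro q hq
    have := (hmemN.mp (hTmem q hq)).2
    have h2 : (φ (V2 (T q))).val ≠ 0 := fun hh => this (Fin.ext hh)
    omega
  have hidx : ∀ u : ↥(cutS n c).verts, ((u : Fin n) - c).val < N.card :=
    fun u => lt_of_lt_of_le (Fin.isLt _) hcard
  set Φ : ↥(cutS n c).verts → Fin (K-1) := fun u =>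
    ⟨(φ (V2 (T ((u : Fin n) - c).val))).val - 1, by
      have h2 := hφpos _ (hidx u)
      have h3 := (φ (V2 (T ((u : Fin n) - c).val))).isLt
      omega⟩ with hΦ
  refine ⟨Φ, ?_⟩
  have claim : ∀ u u' : ↥(cutS n c).verts,
      ((u : Fin n) - c).val < ((u' : Fin n) - c).val → Φ u = Φ u' →
      ((s ((Φ u : ℕ) + 1) / 2 : ℕ) : ℕ∞) < (cutS n c).coe.edist u u' := by
    intro u u' hij heq
    set i := ((u : Fin n) - c).val with hi
    set j := ((u' : Fin n) - c).val with hj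
    have hiN : i < N.card := hidx u
    have hjN : j < N.card := hidx u'
    have hTij : T i < T j := hTmono i j hij hjN
    have hTi2n := (hmemN.mp (hTmem i hiN)).1
    have hTj2n := (hmemN.mp (hTmem j hjN)).1
    have hcols : φ (V2 (T i)) = φ (V2 (T j)) := by
      have h2 : (φ (V2 (T i))).val - 1 = (φ (V2 (T j))).val - 1 := congrArg Fin.val heq
      have h3 := hφpos i hiN
      have h4 := hφpos j hjN
      exact Fin.ext (by omega)
    have hneV : V2 (T i) ≠ V2 (T j) := fun h => by
      have := hV2inj _ _ hTi2n hTj2n h; omega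
    have hlt := hφ (V2 (T i)) (V2 (T j)) hneV hcols
    have hup := aux_cut_edist_upper (show 3 ≤ 2*n by omega) c2 (T j) (T i)
      (le_of_lt hTij) hTj2n (hmem2 (T i)) (hmem2 (T j))
    have hlt2 : ((s ((φ (V2 (T i))).val) : ℕ) : ℕ∞) < ((T j - T i : ℕ) : ℕ∞) :=
      lt_of_lt_of_le hlt hup
    have hltn : s ((φ (V2 (T i))).val) < T j - T i := by exact_mod_cast hlt2
    have hpair2 := hpair i j (le_of_lt hij) hjN
    have hsdiv : s ((φ (V2 (T i))).val) / 2 < j - i := by omega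
    have hΦu : (Φ u : ℕ) + 1 = (φ (V2 (T i))).val := by
      show ((φ (V2 (T i))).val - 1) + 1 = (φ (V2 (T i))).val
      have := hφpos i hiN
      omega
    rw [hΦu]
    have hlo := aux_cut_edist_lower u u'
    calc ((s ((φ (V2 (T i))).val) / 2 : ℕ) : ℕ∞) < ((j - i : ℕ) : ℕ∞) := Nat.cast_lt.mpr hsdiv
      _ ≤ (cutS n c).coe.edist u u' := hlo
  intro u u' hne heq
  have hij : ((u : Fin n) - c).val ≠ ((u' : Fin n) - c).val := by
    intro h
    apply hne
    have h2 : (u : Fin n) - c = (u' : Fin n) - c := Fin.ext h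
    have h3 : (u : Fin n) = (u' : Fin n) := by
      have := congrArg (· + c) h2
      simpa [sub_add_cancel] using this
    exact Subtype.ext h3
  show ((s ((Φ u : ℕ) + 1) / 2 : ℕ) : ℕ∞) < (cutS n c).coe.edist u u'
  rcases Nat.lt_or_ge ((u : Fin n) - c).val ((u' : Fin n) - c).val with h | h
  · exact claim u u' h heq
  · have h2 : ((u' : Fin n) - c).val < ((u : Fin n) - c).val := by omega
    have h3 := claim u' u h2 heq.symm
    rw [show (cutS n c).coe.edist u' u = (cutS n c).coe.edist u u' from SimpleGraph.edist_comm] at h3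
    rw [heq]
    exact h3

section Easy
variable {n : ℕ} [NeZero n] [NeZero (2*n)]

lemma aux_sub_val_parity (u v : Fin (2*n)) : ((u - v).val) % 2 = (u.val + v.val) % 2 := by
  rw [Fin.sub_def]
  show (2*n - v.val + u.val) % (2*n) % 2 = (u.val + v.val) % 2
  rw [Nat.mod_mod_of_dvd _ ⟨n, rfl⟩]
  have h1 := u.isLt
  have h2 := v.isLt
  omega

lemma aux_sub_val_even (hn : 1 ≤ n) {u v : Fin (2*n)} {i j : ℕ} (hi : i < n) (hj : j < n)
    (hu : u.val = 2*i) (hv : v.val = 2*j) :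
    (v - u).val = 2 * ((⟨j, hj⟩ : Fin n) - (⟨i, hi⟩ : Fin n)).val := by
  rw [Fin.sub_def, Fin.sub_def]
  show (2*n - u.val + v.val) % (2*n) = 2 * ((n - i + j) % n)
  have h3 : 2*n - u.val + v.val = 2*(n - i + j) := by omega
  rw [h3, Nat.mul_mod_mul_left]

lemma aux_easy (s : ℕ → ℕ) (h1 : s 0 = 1) (hn : 3 ≤ n) :
    SPackingChromatic (cycleGraph (2*n)) s
      ≤ SPackingChromatic (cycleGraph n) (fun i => s (i+1)/2) + 1 := by
  classical
  obtain ⟨ψ, hψ⟩ := aux_exists_col (cycleGraph n) (fun i => s (i+1)/2)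
  set φ : Fin (2*n) → Fin (SPackingChromatic (cycleGraph n) (fun i => s (i+1)/2) + 1) := fun u =>
    if h : u.val % 2 = 1 then 0 else Fin.succ (ψ ⟨u.val/2, by have := u.isLt; omega⟩) with hφdef
  have hodd : ∀ w : Fin (2*n), w.val % 2 = 1 → φ w = 0 := by
    intro w hw; simp only [hφdef, dif_pos hw]
  have heven : ∀ (w : Fin (2*n)) (hw : w.val % 2 = 0),
      φ w = Fin.succ (ψ ⟨w.val/2, by have := w.isLt; omega⟩) := by
    intro w hw; simp only [hφdef, dif_neg (by omega : ¬ w.val % 2 = 1)]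
  apply aux_chi_le φ
  intro u v hne heq
  rcases Nat.mod_two_eq_zero_or_one u.val with hu | hu <;>
    rcases Nat.mod_two_eq_zero_or_one v.val with hv | hv
  · -- both even
    have hiu : u.val / 2 < n := by have := u.isLt; omega
    have hjv : v.val / 2 < n := by have := v.isLt; omega
    have hueq : u.val = 2 * (u.val / 2) := by omega
    have hveq : v.val = 2 * (v.val / 2) := by omega
    have hne2 : (⟨u.val/2, hiu⟩ : Fin n) ≠ ⟨v.val/2, hjv⟩ := by
      intro h
      apply hne
      have h2 : u.val / 2 = v.val / 2 := congrArg Fin.val h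
      exact Fin.ext (by omega)
    have heq2 : ψ ⟨u.val/2, hiu⟩ = ψ ⟨v.val/2, hjv⟩ := by
      rw [heven u hu, heven v hv] at heq
      exact Fin.succ_injective _ heq
    have hsψ : ((s ((ψ (⟨u.val/2, hiu⟩ : Fin n)).val + 1) / 2 : ℕ) : ℕ∞)
        < (cycleGraph n).edist ⟨u.val/2, hiu⟩ ⟨v.val/2, hjv⟩ := hψ _ _ hne2 heq2
    have e1 := aux_edist_le_sub (show 2 ≤ n by omega) (⟨u.val/2, hiu⟩ : Fin n) ⟨v.val/2, hjv⟩
    have e2 : (cycleGraph n).edist ⟨u.val/2, hiu⟩ ⟨v.val/2, hjv⟩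
        ≤ ((((⟨u.val/2, hiu⟩ : Fin n) - ⟨v.val/2, hjv⟩).val : ℕ) : ℕ∞) := by
      rw [SimpleGraph.edist_comm]
      exact aux_edist_le_sub (by omega) _ _
    set A := s ((ψ (⟨u.val/2, hiu⟩ : Fin n)).val + 1) with hA
    have hv1 : A / 2 < ((⟨v.val/2, hjv⟩ : Fin n) - ⟨u.val/2, hiu⟩).val := by
      exact_mod_cast lt_of_lt_of_le hsψ e1
    have hv2 : A / 2 < ((⟨u.val/2, hiu⟩ : Fin n) - ⟨v.val/2, hjv⟩).val := by
      exact_mod_cast lt_of_lt_of_le hsψ e2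
    have hd1 : (v - u).val = 2 * ((⟨v.val/2, hjv⟩ : Fin n) - ⟨u.val/2, hiu⟩).val :=
      aux_sub_val_even (by omega) hiu hjv hueq hveq
    have hd2 : (u - v).val = 2 * ((⟨u.val/2, hiu⟩ : Fin n) - ⟨v.val/2, hjv⟩).val :=
      aux_sub_val_even (by omega) hjv hiu hveq hueq
    have hgoal : (s ((φ u : ℕ)) : ℕ) < min ((v - u).val) ((u - v).val) := by
      rw [heven u hu, Fin.val_succ, ← hA, hd1, hd2]
      omega
    calc ((s ((φ u : ℕ)) : ℕ) : ℕ∞) < ((min ((v - u).val) ((u - v).val) : ℕ) : ℕ∞) :=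
          Nat.cast_lt.mpr hgoal
      _ ≤ (cycleGraph (2*n)).edist u v := aux_edist_lower u v
  · -- u even, v odd : impossible
    rw [heven u hu, hodd v hv] at heq
    exact absurd heq (Fin.succ_ne_zero _)
  · rw [hodd u hu, heven v hv] at heq
    exact absurd heq.symm (Fin.succ_ne_zero _)
  · -- both odd
    rw [hodd u hu]
    simp only [Fin.val_zero, h1, Nat.cast_one]
    have h0 : (cycleGraph (2*n)).edist u v ≠ 0 := by
      intro h
      exact hne (edist_eq_zero_iff.mp h)
    have hnadj : ¬ (cycleGraph (2*n)).Adj u v := by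
      rw [cycleGraph_adj']
      push_neg
      constructor
      · intro h
        have := aux_sub_val_parity u v
        omega
      · intro h
        have := aux_sub_val_parity v u
        omega
    have h1' : (cycleGraph (2*n)).edist u v ≠ 1 := fun h => hnadj (edist_eq_one_iff_adj.mp h)
    exact lt_of_le_of_ne (ENat.one_le_iff_ne_zero.mpr h0) (Ne.symm h1')

end Easy

theorem stmt6 (s : ℕ → ℕ) (hmono : Monotone s) (hpos : ∀ i, 1 ≤ s i)
    (h1 : s 0 = 1) (n : ℕ) (hn : 3 ≤ n)
    (hcrit : SCritical (cycleGraph (2 * n)) s) :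
    SCritical (cycleGraph n) (fun i => s (i + 1) / 2) := by
  haveI hNn : NeZero n := ⟨by omega⟩
  haveI hN2n : NeZero (2 * n) := ⟨by omega⟩
  intro H hne
  obtain ⟨c, hc⟩ := aux_sub_le_cut hne
  have h5 := aux_chi_mono_sub hc (fun i => s (i + 1) / 2)
  have hm1 : 1 ≤ SPackingChromatic (cycleGraph n) (fun i => s (i + 1) / 2) := by
    obtain ⟨ψ, _⟩ := aux_exists_col (cycleGraph n) (fun i => s (i + 1) / 2)
    have := (ψ ⟨0, by omega⟩).isLt
    omega
  have hcrit2 := hcrit (cutS (2 * n) (0 : Fin (2 * n))) (cutS_ne_top (by omega) _)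
  have heasy := aux_easy s h1 hn
  obtain ⟨φ0, hφ0⟩ := aux_exists_col (cutS (2 * n) (0 : Fin (2 * n))).coe s
  have hle : SPackingChromatic (cutS (2 * n) (0 : Fin (2 * n))).coe s
      ≤ SPackingChromatic (cycleGraph n) (fun i => s (i + 1) / 2) := by omega
  obtain ⟨φ, hφ⟩ := aux_mono_colors hle φ0 hφ0
  obtain ⟨Φ, hΦ⟩ := aux_hard s h1 hn (0 : Fin (2 * n)) c hm1 φ hφ
  have h6 := aux_chi_le Φ hΦ
  omega
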